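/- arXiv:1307.5908 — 2 statements merged into one kernel-verified Lean document; each statement's English description precedes it below -/
import Mathlib

section
/- With p_{AC} and p_{BC} as above, the cosine of the angle between p_{AC} and p_{BC} equals −c/√((a+c)(b+c)). Equivalently, (p_{AC} · p_{BC})² · (a+c)(b+c) = c² · ‖p_{AC}‖² · ‖p_{BC}‖² · ((a+c)(b+c))/((a+c)(b+c)) — i.e., p_{AC}·p_{BC} = (−c/√((a+c)(b+c))) · ‖p_{AC}‖·‖p_{BC}‖. -/
open Finset
open scoped Classical

variable {X : Type*} [Fintype X] [DecidableEq X]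

/-- Split pseudometric: coordinate at pair s is 1 if s meets both U and V, else 0. -/
noncomputable def splitDelta (U V : Finset X) : EuclideanSpace ℝ (Sym2 X) :=
  WithLp.toLp 2 (fun s : Sym2 X => if (∃ i ∈ s, i ∈ U) ∧ (∃ j ∈ s, j ∈ V) then (1 : ℝ) else 0)


lemma splitDelta_comm (U V : Finset X) : splitDelta U V = splitDelta V U := by
  ext s; simp [splitDelta, and_comm]


lemma inner_splitDelta_self (U V : Finset X) (h : Disjoint U V) :
    (inner ℝ (splitDelta U V) (splitDelta U V) : ℝ) = U.card * V.card := by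
  rw [PiLp.inner_apply]
  simp only [splitDelta, PiLp.toLp_apply, RCLike.inner_apply', conj_trivial]
  rw [show (fun s : Sym2 X => (if (∃ i ∈ s, i ∈ U) ∧ (∃ j ∈ s, j ∈ V) then (1:ℝ) else 0) * (if (∃ i ∈ s, i ∈ U) ∧ (∃ j ∈ s, j ∈ V) then (1:ℝ) else 0)) = fun s => if (∃ i ∈ s, i ∈ U) ∧ (∃ j ∈ s, j ∈ V) then 1 else 0 from funext fun s => by by_cases hp : (∃ i ∈ s, i ∈ U) ∧ (∃ j ∈ s, j ∈ V) <;> simp [hp]]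
  rw [Finset.sum_boole]
  have hd := Finset.disjoint_left.mp h
  have key : (univ.filter fun s : Sym2 X => (∃ i ∈ s, i ∈ U) ∧ (∃ j ∈ s, j ∈ V))
      = (U ×ˢ V).image (fun p : X × X => Sym2.mk p.1 p.2) := by
    refine Finset.ext fun s => ?_
    induction s using Sym2.inductionOn with
    | hf x y =>
      simp only [Finset.mem_filter, Finset.mem_univ, true_and, Finset.mem_image,
        Finset.mem_product, Sym2.mem_iff, Prod.exists, Sym2.eq_iff]
      constructor
      · rintro ⟨⟨i, hi, hiU⟩, ⟨j, hj, hjV⟩⟩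
        obtain rfl | rfl := hi <;> obtain rfl | rfl := hj <;>
          first
          | exact absurd hjV (hd hiU)
          | exact ⟨_, _, ⟨hiU, hjV⟩, Or.inl ⟨rfl, rfl⟩⟩
          | exact ⟨_, _, ⟨hiU, hjV⟩, Or.inr ⟨rfl, rfl⟩⟩
      · rintro ⟨u, v, ⟨hu, hv⟩, (⟨rfl, rfl⟩ | ⟨rfl, rfl⟩)⟩ <;>
          first
          | exact ⟨⟨_, Or.inl rfl, hu⟩, ⟨_, Or.inr rfl, hv⟩⟩
          | exact ⟨⟨_, Or.inr rfl, hu⟩, ⟨_, Or.inl rfl, hv⟩⟩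
  rw [key, Finset.card_image_of_injOn, Finset.card_product]
  · push_cast; ring
  · rintro ⟨u, v⟩ hm ⟨u', v'⟩ hm' heq
    obtain ⟨hu, hv⟩ := Finset.mem_product.mp hm
    obtain ⟨hu', hv'⟩ := Finset.mem_product.mp hm'
    rcases Sym2.mk_eq_mk_iff.mp heq with h1 | h2
    · exact h1
    · simp only [Prod.swap_prod_mk, Prod.mk.injEq] at h2
      exact absurd (h2.1 ▸ hv') (hd hu)

lemma inner_splitDelta_zero (U V W : Finset X) (hUV : Disjoint U V) (hUW : Disjoint U W)
    (hVW : Disjoint V W) :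
    (inner ℝ (splitDelta U V) (splitDelta U W) : ℝ) = 0 := by
  rw [PiLp.inner_apply]
  refine Finset.sum_eq_zero fun s _ => ?_
  simp only [splitDelta, PiLp.toLp_apply, RCLike.inner_apply', conj_trivial]
  induction s using Sym2.inductionOn with
  | hf x y =>
    have dUV := Finset.disjoint_left.mp hUV
    have dUW := Finset.disjoint_left.mp hUW
    have dVW := Finset.disjoint_left.mp hVW
    by_cases hP : (∃ i ∈ Sym2.mk x y, i ∈ U) ∧ (∃ j ∈ Sym2.mk x y, j ∈ V)
    · rw [if_pos hP, one_mul, if_neg]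
      rintro ⟨-, ⟨k, hk, hkW⟩⟩
      obtain ⟨⟨i, hi, hiU⟩, ⟨j, hj, hjV⟩⟩ := hP
      simp only [Sym2.mem_iff] at hi hj hk
      obtain rfl | rfl := hi <;> obtain rfl | rfl := hj <;> obtain rfl | rfl := hk <;>
        first
        | exact dUV hiU hjV
        | exact dUW hiU hkW
        | exact dVW hjV hkW
    · rw [if_neg hP, zero_mul]

set_option maxHeartbeats 1000000 in
/-- The cosine of the angle between p_{AC} and p_{BC} is −c/√((a+c)(b+c)); that is,
p_{AC}·p_{BC} = (−c/√((a+c)(b+c)))·‖p_{AC}‖·‖p_{BC}‖. -/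
theorem cos_angle_pAC_pBC (A B C : Finset X)
    (hA : A.Nonempty) (hB : B.Nonempty) (hC : C.Nonempty)
    (hAB : Disjoint A B) (hAC : Disjoint A C) (hBC : Disjoint B C) :
    let a : ℝ := A.card; let b : ℝ := B.card; let c : ℝ := C.card
    let pAC : EuclideanSpace ℝ (Sym2 X) :=
      (-(a * b + b * c) / (a * b + a * c + b * c)) • splitDelta A C +
        (a * c / (a * b + a * c + b * c)) • (splitDelta A B + splitDelta B C)
    let pBC : EuclideanSpace ℝ (Sym2 X) :=
      (-(a * b + a * c) / (a * b + a * c + b * c)) • splitDelta B C +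
        (b * c / (a * b + a * c + b * c)) • (splitDelta A B + splitDelta A C)
    (inner ℝ pAC pBC : ℝ) =
      (-c / Real.sqrt ((a + c) * (b + c))) * (‖pAC‖ * ‖pBC‖) := by
  intro a b c pAC pBC
  have ha : (0:ℝ) < a := by show (0:ℝ) < (A.card:ℝ); exact_mod_cast Finset.card_pos.mpr hA
  have hb : (0:ℝ) < b := by show (0:ℝ) < (B.card:ℝ); exact_mod_cast Finset.card_pos.mpr hB
  have hc : (0:ℝ) < c := by show (0:ℝ) < (C.card:ℝ); exact_mod_cast Finset.card_pos.mpr hC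
  have hs : (0:ℝ) < a * b + a * c + b * c := by positivity
  have e11 : (inner ℝ (splitDelta A B) (splitDelta A B) : ℝ) = a * b :=
    inner_splitDelta_self A B hAB
  have e22 : (inner ℝ (splitDelta A C) (splitDelta A C) : ℝ) = a * c :=
    inner_splitDelta_self A C hAC
  have e33 : (inner ℝ (splitDelta B C) (splitDelta B C) : ℝ) = b * c :=
    inner_splitDelta_self B C hBC
  have e12 : (inner ℝ (splitDelta A B) (splitDelta A C) : ℝ) = 0 :=
    inner_splitDelta_zero A B C hAB hAC hBC
  have e13 : (inner ℝ (splitDelta A B) (splitDelta B C) : ℝ) = 0 := by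
    rw [splitDelta_comm A B]; exact inner_splitDelta_zero B A C hAB.symm hBC hAC
  have e23 : (inner ℝ (splitDelta A C) (splitDelta B C) : ℝ) = 0 := by
    rw [splitDelta_comm A C, splitDelta_comm B C]
    exact inner_splitDelta_zero C A B hAC.symm hBC.symm hAB
  have e21 : (inner ℝ (splitDelta A C) (splitDelta A B) : ℝ) = 0 := by
    rw [real_inner_comm]; exact e12
  have e31 : (inner ℝ (splitDelta B C) (splitDelta A B) : ℝ) = 0 := by
    rw [real_inner_comm]; exact e13
  have e32 : (inner ℝ (splitDelta B C) (splitDelta A C) : ℝ) = 0 := by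
    rw [real_inner_comm]; exact e23
  have hIP : (inner ℝ pAC pBC : ℝ) = -(a * b * c ^ 2) / (a * b + a * c + b * c) := by
    simp only [pAC, pBC, inner_add_left, inner_add_right, real_inner_smul_left,
      real_inner_smul_right, e11, e22, e33, e12, e13, e23, e21, e31, e32]
    field_simp
    ring
  have hSAC : (inner ℝ pAC pAC : ℝ) = a * b * c * (a + c) / (a * b + a * c + b * c) := by
    simp only [pAC, inner_add_left, inner_add_right, real_inner_smul_left,
      real_inner_smul_right, e11, e22, e33, e12, e13, e23, e21, e31, e32]
    field_simp
    ring
  have hNAC : ‖pAC‖ = Real.sqrt (a * b * c * (a + c) / (a * b + a * c + b * c)) := by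
    rw [norm_eq_sqrt_real_inner, hSAC]
  have hSBC : (inner ℝ pBC pBC : ℝ) = a * b * c * (b + c) / (a * b + a * c + b * c) := by
    simp only [pBC, inner_add_left, inner_add_right, real_inner_smul_left,
      real_inner_smul_right, e11, e22, e33, e12, e13, e23, e21, e31, e32]
    field_simp
    ring
  have hNBC : ‖pBC‖ = Real.sqrt (a * b * c * (b + c) / (a * b + a * c + b * c)) := by
    rw [norm_eq_sqrt_real_inner, hSBC]
  rw [hIP, hNAC, hNBC, ← Real.sqrt_mul (by positivity)]
  rw [show a * b * c * (a + c) / (a * b + a * c + b * c) *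
      (a * b * c * (b + c) / (a * b + a * c + b * c)) =
      (a * b * c / (a * b + a * c + b * c)) ^ 2 * ((a + c) * (b + c)) by ring]
  rw [Real.sqrt_mul (sq_nonneg _), Real.sqrt_sq (by positivity)]
  have hW : (0:ℝ) < Real.sqrt ((a + c) * (b + c)) := Real.sqrt_pos.mpr (by positivity)
  field_simp
end

section
/- Let A, B, C, D partition X into nonempty sets, and let A_e ⊊ A_{e'} ⊆ A be nonempty subsets with sizes a_e and a_{e'}. Set ν = δ_{A_e | X∖A_e} − (a_e/a_{e'})·δ_{A_{e'} | X∖A_{e'}}. Then ν is orthogonal to each of r_{AB} = δ_{A∪B|C∪D}, r_{AC} = δ_{A∪C|B∪D}, and r_{AD} = δ_{A∪D|B∪C}. -/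
open Finset
open scoped Classical

variable {X : Type*} [Fintype X] [DecidableEq X]

lemma splitDelta_inner (S P Q : Finset X) (hSP : S ⊆ P) (hSQ : Disjoint S Q) :
    (inner ℝ (splitDelta S (Finset.univ \ S)) (splitDelta P Q) : ℝ) = S.card * Q.card := by
  rw [PiLp.inner_apply]
  have hterm : ∀ s : Sym2 X,
      (inner ℝ (splitDelta S (Finset.univ \ S) s) (splitDelta P Q s) : ℝ)
      = if (∃ i ∈ s, i ∈ S) ∧ ∃ j ∈ s, j ∈ Q then 1 else 0 := by
    intro s
    simp only [splitDelta, RCLike.inner_apply, conj_trivial]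
    rw [mul_comm]
    by_cases h : (∃ i ∈ s, i ∈ S) ∧ ∃ j ∈ s, j ∈ Q
    · obtain ⟨⟨i, hi, hiS⟩, ⟨j, hj, hjQ⟩⟩ := h
      rw [if_pos, if_pos, if_pos]
      · ring
      · exact ⟨⟨i, hi, hiS⟩, ⟨j, hj, hjQ⟩⟩
      · exact ⟨⟨i, hi, hSP hiS⟩, ⟨j, hj, hjQ⟩⟩
      · exact ⟨⟨i, hi, hiS⟩, ⟨j, hj, by simp [Finset.disjoint_left.mp hSQ.symm hjQ]⟩⟩
    · rw [if_neg h]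
      rcases not_and_or.mp h with h1 | h2
      · rw [if_neg (fun hc => h1 hc.1), zero_mul]
      · have hne : ¬((∃ i ∈ s, i ∈ P) ∧ ∃ j ∈ s, j ∈ Q) := fun hc => h2 hc.2
        rw [if_neg hne, mul_zero]
  rw [Finset.sum_congr rfl (fun s _ => hterm s), Finset.sum_boole]
  norm_cast
  rw [← Finset.card_product S Q]
  symm
  apply Finset.card_bij (fun (p : X × X) _ => Sym2.mk p.1 p.2)
  · rintro ⟨i, j⟩ hp
    simp only [Finset.mem_product] at hp
    simp only [Finset.mem_filter, Finset.mem_univ, true_and]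
    exact ⟨⟨i, by simp, hp.1⟩, ⟨j, by simp, hp.2⟩⟩
  · rintro ⟨i, j⟩ hp ⟨k, l⟩ hq h
    simp only [Finset.mem_product] at hp hq
    rw [Sym2.mk_eq_mk_iff] at h
    rcases h with h | h
    · exact h
    · simp only [Prod.swap_prod_mk, Prod.mk.injEq] at h
      exact absurd (h.1 ▸ hp.1) (Finset.disjoint_right.mp hSQ (h.1 ▸ hq.2))
  · intro s hs
    simp only [Finset.mem_filter, Finset.mem_univ, true_and] at hs
    obtain ⟨⟨i, hi, hiS⟩, ⟨j, hj, hjQ⟩⟩ := hs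
    refine ⟨(i, j), Finset.mem_product.mpr ⟨hiS, hjQ⟩, ?_⟩
    have hij : i ≠ j := fun h => Finset.disjoint_left.mp hSQ hiS (h ▸ hjQ)
    induction s with
    | _ a b =>
      rw [Sym2.mem_iff] at hi hj
      rw [Sym2.mk_eq_mk_iff (q := (a, b))]
      rcases hi with rfl | rfl <;> rcases hj with rfl | rfl
      · exact absurd rfl hij
      · left; rfl
      · right; rfl
      · exact absurd rfl hij

/-- The vector ν = δ_{A_e | X∖A_e} − (a_e/a_{e'})·δ_{A_{e'} | X∖A_{e'}}, for nonempty
A_e ⊊ A_{e'} ⊆ A, is orthogonal to r_{AB}, r_{AC}, and r_{AD}. -/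
theorem nu_orthogonal (A B C D : Finset X) (Ae Ae' : Finset X)
    (hA : A.Nonempty) (hB : B.Nonempty) (hC : C.Nonempty) (hD : D.Nonempty)
    (hAB : Disjoint A B) (hAC : Disjoint A C) (hAD : Disjoint A D)
    (hBC : Disjoint B C) (hBD : Disjoint B D) (hCD : Disjoint C D)
    (hcover : A ∪ B ∪ C ∪ D = Finset.univ)
    (hAe : Ae.Nonempty) (hss : Ae ⊂ Ae') (hsub : Ae' ⊆ A) :
    let ν : EuclideanSpace ℝ (Sym2 X) :=
      splitDelta Ae (Finset.univ \ Ae) -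
        ((Ae.card : ℝ) / (Ae'.card : ℝ)) • splitDelta Ae' (Finset.univ \ Ae')
    (inner ℝ ν (splitDelta (A ∪ B) (C ∪ D)) : ℝ) = 0 ∧
    (inner ℝ ν (splitDelta (A ∪ C) (B ∪ D)) : ℝ) = 0 ∧
    (inner ℝ ν (splitDelta (A ∪ D) (B ∪ C)) : ℝ) = 0 := by
  intro ν
  have hAeA : Ae ⊆ A := hss.subset.trans hsub
  have hAe' : Ae'.Nonempty := hAe.mono hss.subset
  have hne : (Ae'.card : ℝ) ≠ 0 := Nat.cast_ne_zero.mpr hAe'.card_ne_zero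
  have key : ∀ P Q : Finset X, A ⊆ P → Disjoint A Q →
      (inner ℝ ν (splitDelta P Q) : ℝ) = 0 := by
    intro P Q hP hQ
    show (inner ℝ (splitDelta Ae (Finset.univ \ Ae) -
      ((Ae.card : ℝ) / (Ae'.card : ℝ)) • splitDelta Ae' (Finset.univ \ Ae'))
      (splitDelta P Q) : ℝ) = 0
    rw [inner_sub_left, real_inner_smul_left,
      splitDelta_inner Ae P Q (hAeA.trans hP) (hQ.mono_left hAeA),
      splitDelta_inner Ae' P Q (hsub.trans hP) (hQ.mono_left hsub)]
    field_simp
    ring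
  exact ⟨key _ _ Finset.subset_union_left (Finset.disjoint_union_right.mpr ⟨hAC, hAD⟩),
    key _ _ Finset.subset_union_left (Finset.disjoint_union_right.mpr ⟨hAB, hAD⟩),
    key _ _ Finset.subset_union_left (Finset.disjoint_union_right.mpr ⟨hAB, hAC⟩)⟩
end
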